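/- Let A be a self-adjoint linear map on a real vector space V with a non-degenerate symmetric bilinear form of signature (p,q). If λ is a non-real complex eigenvalue of A, then the restriction of the bilinear form to the (real) generalized eigenspace E_λ has signature (p_λ, q_λ) with p_λ = q_λ. -/

import Mathlib

set_option maxHeartbeats 1000000
set_option synthInstance.maxHeartbeats 400000


/-- A symmetric bilinear form has signature `(p,q)` (p minus signs, q plus signs) if there is a
basis which is orthogonal, with the form taking value `-1` on the first `p` basis vectors and
`+1` on the last `q` basis vectors. -/
def HasSignature {V : Type*} [AddCommGroup V] [Module ℝ V]
    (B : LinearMap.BilinForm ℝ V) (p q : ℕ) : Prop :=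
  ∃ e : Module.Basis (Fin p ⊕ Fin q) ℝ V,
    (∀ i j, i ≠ j → B (e i) (e j) = 0) ∧
    (∀ i : Fin p, B (e (Sum.inl i)) (e (Sum.inl i)) = -1) ∧
    (∀ i : Fin q, B (e (Sum.inr i)) (e (Sum.inr i)) = 1)

/-- The generalized eigenspace `E_λ = ker(((A-λI)(A-conj(λ)I))^m)`, realized as the kernel
of the `m`-th power of the real operator `A² - 2Re(λ)A + |λ|²·Id`, where `m = dim V`. -/
noncomputable def genEig {V : Type*} [AddCommGroup V] [Module ℝ V]
    (A : Module.End ℝ V) (lam : ℂ) : Submodule ℝ V :=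
  LinearMap.ker ((A * A - (2 * lam.re) • A +
    (lam.re ^ 2 + lam.im ^ 2) • (1 : Module.End ℝ V)) ^ Module.finrank ℝ V)

lemma Commute.aeval_poly {R A : Type*} [CommSemiring R] [Semiring A] [Algebra R A]
    {S M : A} (h : Commute S M) (p : Polynomial R) :
    Commute S (Polynomial.aeval M p) := by
  induction p using Polynomial.induction_on with
  | C r => simp only [Polynomial.aeval_C]; exact (Algebra.commutes r S).symm
  | add p q hp hq => simpa [map_add] using hp.add_right hq
  | monomial n r hp =>
      have : Polynomial.aeval M (Polynomial.C r * Polynomial.X ^ (n+1))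
          = Polynomial.aeval M (Polynomial.C r * Polynomial.X ^ n) * M := by
        simp [map_mul, map_pow, pow_succ, mul_assoc]
      rw [this]
      exact hp.mul_right h


open Polynomial in
lemma sqrtPoly (n : ℕ) : ∃ p g : ℝ[X], p * p = 1 + X + X ^ (n + 1) * g ∧ p.coeff 0 = 1 := by
  induction n with
  | zero => exact ⟨1, -1, by ring, by simp⟩
  | succ k ih =>
    obtain ⟨p, g, hp, hc⟩ := ih
    have hX : (X : ℝ[X]) ∣ p - 1 := X_dvd_iff.mpr (by simp [hc])
    obtain ⟨s, hs⟩ := hX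
    refine ⟨p - C (2⁻¹:ℝ) * (X ^ (k+1) * g),
      -(g * s) + X ^ k * (C (2⁻¹:ℝ) * C (2⁻¹:ℝ) * (g * g)), ?_, ?_⟩
    · have h2 : (2:ℝ[X]) * C (2⁻¹:ℝ) = 1 := by
        rw [← map_ofNat (C : ℝ →+* ℝ[X]) 2, ← C_mul]
        norm_num
      linear_combination hp - (X^(k+1)*g) * hs - (X^(k+1)*g*p) * h2
    · simp [coeff_sub, hc, coeff_C_mul]


section SA
variable {W : Type*} [AddCommGroup W] [Module ℝ W]
  (B : LinearMap.BilinForm ℝ W)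

def IsSA (T : Module.End ℝ W) : Prop := ∀ x y, B (T x) y = B x (T y)

variable {B}

lemma IsSA.one : IsSA B 1 := fun _ _ => rfl

lemma IsSA.smul {T : Module.End ℝ W} (h : IsSA B T) (r : ℝ) : IsSA B (r • T) := by
  intro x y
  simp [h x y]

lemma IsSA.add {T U : Module.End ℝ W} (hT : IsSA B T) (hU : IsSA B U) : IsSA B (T + U) := by
  intro x y
  simp [LinearMap.add_apply, hT x y, hU x y]

lemma IsSA.sub {T U : Module.End ℝ W} (hT : IsSA B T) (hU : IsSA B U) : IsSA B (T - U) := by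
  intro x y
  simp [LinearMap.sub_apply, hT x y, hU x y]

lemma IsSA.neg {T : Module.End ℝ W} (hT : IsSA B T) : IsSA B (-T) := by
  intro x y
  simp [LinearMap.neg_apply, hT x y]

lemma IsSA.mul {T U : Module.End ℝ W} (hT : IsSA B T) (hU : IsSA B U)
    (hc : Commute T U) : IsSA B (T * U) := by
  intro x y
  have h : B (T (U x)) y = B x ((U * T) y) := by
    rw [hT (U x) y, hU x (T y)]; rfl
  rw [← hc.eq] at h
  simpa [Module.End.mul_apply] using h

lemma IsSA.pow {T : Module.End ℝ W} (hT : IsSA B T) (n : ℕ) : IsSA B (T ^ n) := by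
  induction n with
  | zero => simpa using IsSA.one
  | succ k ih => simpa [pow_succ] using ih.mul hT (Commute.pow_left rfl k)

lemma IsSA.sum {ι : Type*} (s : Finset ι) (f : ι → Module.End ℝ W)
    (h : ∀ i ∈ s, IsSA B (f i)) : IsSA B (∑ i ∈ s, f i) := by
  classical
  induction s using Finset.induction_on with
  | empty => intro x y; simp
  | @insert a s' hx ih =>
      have := (h a (Finset.mem_insert_self a s')).add
        (ih fun i hi => h i (Finset.mem_insert_of_mem hi))
      simpa [Finset.sum_insert hx] using this

lemma IsSA.aeval {M : Module.End ℝ W} (hM : IsSA B M) (p : Polynomial ℝ) :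
    IsSA B (Polynomial.aeval M p) := by
  rw [Polynomial.aeval_eq_sum_range]
  exact IsSA.sum _ _ fun i _ => (hM.pow i).smul _

lemma IsSA.inv {T U : Module.End ℝ W} (hT : IsSA B T) (h1 : T * U = 1) (h2 : U * T = 1) :
    IsSA B U := by
  intro x y
  have hy : T (U y) = y := by
    have := LinearMap.ext_iff.mp h1 y; simpa using this
  have hx : T (U x) = x := by
    have := LinearMap.ext_iff.mp h1 x; simpa using this
  calc B (U x) y = B (U x) (T (U y)) := by rw [hy]
    _ = B (T (U x)) (U y) := (hT (U x) (U y)).symm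
    _ = B x (U y) := by rw [hx]

end SA


section JMod
variable {W : Type*} [AddCommGroup W] [Module ℝ W]

def jSMul (J : Module.End ℝ W) : SMul ℂ W := ⟨fun z x => z.re • x + z.im • J x⟩

def jModule (J : Module.End ℝ W) (hJ : ∀ x, J (J x) = -x) : Module ℂ W :=
  letI := jSMul J
  Module.ofMinimalAxioms
    (fun z x y => by
      show z.re • (x+y) + z.im • J (x+y) = (z.re • x + z.im • J x) + (z.re • y + z.im • J y)
      rw [map_add]; module)
    (fun z w x => by
      show (z+w).re • x + (z+w).im • J x = (z.re • x + z.im • J x) + (w.re • x + w.im • J x)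
      simp only [Complex.add_re, Complex.add_im]; module)
    (fun z w x => by
      show (z*w).re • x + (z*w).im • J x
        = z.re • (w.re • x + w.im • J x) + z.im • J (w.re • x + w.im • J x)
      simp only [Complex.mul_re, Complex.mul_im, map_add, map_smul, hJ x]
      module)
    (fun x => by
      show (1:ℂ).re • x + (1:ℂ).im • J x = x
      simp)

lemma jModule_smul (J : Module.End ℝ W) (hJ : ∀ x, J (J x) = -x) (z : ℂ) (x : W) :
    (letI := jModule J hJ; z • x) = z.re • x + z.im • J x := rfl

lemma jModule_smul_I (J : Module.End ℝ W) (hJ : ∀ x, J (J x) = -x) (x : W) :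
    (letI := jModule J hJ; Complex.I • x) = J x := by
  rw [jModule_smul]; simp

def jTower (J : Module.End ℝ W) (hJ : ∀ x, J (J x) = -x) :
    letI := jModule J hJ; IsScalarTower ℝ ℂ W :=
  letI := jModule J hJ
  ⟨fun r z x => by
    rw [jModule_smul, jModule_smul]
    simp only [Complex.real_smul, Complex.mul_re, Complex.mul_im, Complex.ofReal_re,
      Complex.ofReal_im]
    module⟩

end JMod

theorem keyLemma {W : Type*} [AddCommGroup W] [Module ℝ W] [FiniteDimensional ℝ W]
    (B : LinearMap.BilinForm ℝ W) (hsymm : ∀ x y, B x y = B y x)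
    (hnd : B.Nondegenerate) (J : Module.End ℝ W)
    (hJ : ∀ x, J (J x) = -x) (hsa : IsSA B J) : ∃ r, HasSignature B r r := by
  classical
  letI instC := jModule J hJ
  letI := jTower J hJ
  haveI : Module.Finite ℂ W := Module.Finite.of_restrictScalars_finite ℝ ℂ W
  haveI : Invertible (2:ℂ) := invertibleOfNonzero two_ne_zero
  have hJJB : ∀ x y, B (J x) (J y) = -(B x y) := by
    intro x y
    rw [← hsa (J x) y, hJ x, map_neg, LinearMap.neg_apply]
  -- the hermitian-like complex bilinear form
  set H : W →ₗ[ℂ] W →ₗ[ℂ] ℂ := LinearMap.mk₂ ℂ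
    (fun x y => Complex.mk (B x y) (-(B (J x) y)))
    (fun x x' y => by
      apply Complex.ext <;> simp [Complex.add_re, Complex.add_im] <;> ring)
    (fun c x y => by
      rw [jModule_smul J hJ]
      apply Complex.ext <;>
        simp [Complex.mul_re, Complex.mul_im, map_add, map_smul, hJ x, hJJB, hsa] <;> ring)
    (fun x y y' => by
      apply Complex.ext <;> simp [Complex.add_re, Complex.add_im] <;> ring)
    (fun c x y => by
      rw [jModule_smul J hJ]
      apply Complex.ext <;>
        simp [Complex.mul_re, Complex.mul_im, map_add, map_smul, hJ y, hJJB, ← hsa x] <;> ring)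
    with hHdef
  have Hre : ∀ x y, (H x y).re = B x y := fun x y => rfl
  have Him : ∀ x y, (H x y).im = -(B (J x) y) := fun x y => rfl
  have hHsymm : H.IsSymm := by
    constructor; intro x y
    apply Complex.ext
    · simpa [Hre] using hsymm x y
    · show -(B (J x) y) = -(B (J y) x)
      rw [hsa x y, hsymm x (J y)]
  have hsep : H.SeparatingLeft := by
    intro x hx
    refine hnd.1 x fun y => ?_
    have := congrArg Complex.re (hx y)
    simpa [Hre] using this
  obtain ⟨v, hv⟩ := LinearMap.BilinForm.exists_orthogonal_basis hHsymm
  have hdiag : ∀ i, H (v i) (v i) ≠ 0 := fun i =>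
    by simpa [LinearMap.IsOrtho] using hv.not_isOrtho_basis_self_of_separatingLeft hsep i
  have hc : ∀ i : Fin (Module.finrank ℂ W), ∃ c : ℂ, c ^ 2 = (H (v i) (v i))⁻¹ ∧ c ≠ 0 := by
    intro i
    obtain ⟨c, hc⟩ := IsAlgClosed.exists_pow_nat_eq (k := ℂ) (H (v i) (v i))⁻¹ two_pos
    refine ⟨c, hc, ?_⟩
    intro h
    rw [h] at hc
    exact hdiag i (by simpa [inv_eq_zero, eq_comm, pow_two] using hc)
  choose c hc2 hc0 using hc
  set w : Module.Basis (Fin (Module.finrank ℂ W)) ℂ W := v.unitsSMul fun i => Units.mk0 (c i) (hc0 i) with hwdef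
  have hw_apply : ∀ i, w i = c i • v i := fun i => by
    simp [hwdef, Module.Basis.unitsSMul_apply]
  have hHw : ∀ i j, H (w i) (w j) = if i = j then 1 else 0 := by
    intro i j
    have hsmul : H (w i) (w j) = c i * c j * H (v i) (v j) := by
      simp only [hw_apply, map_smul, LinearMap.smul_apply, smul_eq_mul]
      ring
    rw [hsmul]
    by_cases h : i = j
    · subst h
      rw [if_pos rfl, ← pow_two, hc2]
      exact inv_mul_cancel₀ (hdiag i)
    · rw [if_neg h, hv h, mul_zero]
  -- the real basis
  set σ : (Fin 2 × Fin (Module.finrank ℂ W)) ≃ (Fin (Module.finrank ℂ W) ⊕ Fin (Module.finrank ℂ W)) :=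
    (finTwoEquiv.prodCongr (Equiv.refl _)).trans
      ((Equiv.boolProdEquivSum _).trans (Equiv.sumComm _ _)) with hσ
  set e : Module.Basis (Fin (Module.finrank ℂ W) ⊕ Fin (Module.finrank ℂ W)) ℝ W := (Complex.basisOneI.smulTower w).reindex σ with hedef
  have he_inl : ∀ i, e (Sum.inl i) = J (w i) := by
    intro i
    rw [hedef, Module.Basis.reindex_apply]
    have hσs : σ.symm (Sum.inl i) = (1, i) := by
      rw [Equiv.symm_apply_eq]; rfl
    rw [hσs, Module.Basis.smulTower_apply]
    show Complex.basisOneI 1 • w i = J (w i)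
    rw [show Complex.basisOneI 1 = Complex.I by simp [Complex.basisOneI]]
    exact jModule_smul_I J hJ (w i)
  have he_inr : ∀ i, e (Sum.inr i) = w i := by
    intro i
    rw [hedef, Module.Basis.reindex_apply]
    have hσs : σ.symm (Sum.inr i) = (0, i) := by
      rw [Equiv.symm_apply_eq]; rfl
    rw [hσs, Module.Basis.smulTower_apply]
    show Complex.basisOneI 0 • w i = w i
    rw [show Complex.basisOneI 0 = (1:ℂ) by simp [Complex.basisOneI]]
    exact one_smul ℂ (w i)
  -- value computations
  have hBw : ∀ i j, B (w i) (w j) = if i = j then 1 else 0 := by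
    intro i j
    have := congrArg Complex.re (hHw i j)
    rw [Hre] at this
    rw [this]
    split <;> simp
  have hBJw : ∀ i j, B (J (w i)) (w j) = 0 := by
    intro i j
    have := congrArg Complex.im (hHw i j)
    rw [Him] at this
    have h2 : -(B (J (w i)) (w j)) = 0 := by
      rw [this]; split <;> simp
    linarith
  have hBJJ : ∀ i j, B (J (w i)) (J (w j)) = -(B (w i) (w j)) := by
    intro i j
    rw [hsa (w i) (J (w j)), hJ (w j), map_neg]
  refine ⟨Module.finrank ℂ W, e, ?_, ?_, ?_⟩
  · rintro (i | i) (j | j) hij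
    · rw [he_inl, he_inl, hBJJ, hBw, if_neg (fun h => hij (by rw [h])), neg_zero]
    · rw [he_inl, he_inr, hBJw]
    · rw [he_inr, he_inl, ← hsa, hBJw]
    · rw [he_inr, he_inr, hBw, if_neg (fun h => hij (by rw [h]))]
  · intro i
    rw [he_inl, hBJJ, hBw, if_pos rfl]
  · intro i
    rw [he_inr, hBw, if_pos rfl]

lemma buildJ {W : Type*} [AddCommGroup W] [Module ℝ W]
    (B' : LinearMap.BilinForm ℝ W) (AE : Module.End ℝ W) (hsaAE : IsSA B' AE)
    (a b : ℝ) (hnonreal : b ≠ 0) (m k : ℕ) (hk : m = k + 1)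
    (hQEpow : (AE * AE - (2 * a) • AE + (a ^ 2 + b ^ 2) • 1 : Module.End ℝ W) ^ m = 0) :
    ∃ J : Module.End ℝ W, (∀ x, J (J x) = -x) ∧ IsSA B' J := by
  have hb2 : (b ^ 2 : ℝ) ≠ 0 := pow_ne_zero _ hnonreal
  set QE : Module.End ℝ W := AE * AE - (2 * a) • AE + (a ^ 2 + b ^ 2) • 1 with hQE_eq
  have hsaQE : IsSA B' QE :=
    ((hsaAE.mul hsaAE (Commute.refl AE)).sub (hsaAE.smul _)).add (IsSA.one.smul _)
  -- T := AE - a • 1 ; QE = T*T + b^2 • 1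
  set T : Module.End ℝ W := AE - a • 1 with hT
  have hT2 : QE = T * T + (b ^ 2) • 1 := by
    rw [hQE_eq, hT]
    apply LinearMap.ext
    intro x
    simp only [LinearMap.add_apply, LinearMap.sub_apply, LinearMap.smul_apply,
      Module.End.mul_apply, Module.End.one_apply, map_sub, map_smul]
    module
  set N : Module.End ℝ W := ((b ^ 2)⁻¹) • QE with hN
  set SE : Module.End ℝ W := b⁻¹ • T with hSE
  have hsaT : IsSA B' T := hsaAE.sub (IsSA.one.smul _)
  have hsaSE : IsSA B' SE := hsaT.smul _
  have hsaN : IsSA B' N := hsaQE.smul _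
  have hSS : SE * SE = N - 1 := by
    rw [hSE, hN, smul_mul_smul_comm, hT2, smul_add, smul_smul]
    have ha1 : b⁻¹ * b⁻¹ = (b ^ 2)⁻¹ := by
      rw [pow_two, mul_inv]
    have ha2 : (b ^ 2)⁻¹ * b ^ 2 = 1 := inv_mul_cancel₀ hb2
    rw [ha1, ha2, one_smul, add_sub_cancel_right]
  have hcTQE : Commute T QE := by
    rw [hT2]
    exact ((Commute.refl T).mul_right (Commute.refl T)).add_right
      ((Commute.one_right T).smul_right _)
  have hcSN : Commute SE N := ((hcTQE.smul_right _).smul_left _)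
  have hNnil : N ^ m = 0 := by
    rw [hN, smul_pow, hQEpow, smul_zero]
  -- square root of 1 - N
  obtain ⟨P, g, hPg, -⟩ := sqrtPoly k
  have hMnil : (-N) ^ m = 0 := by
    have hcm : ((-1 : Module.End ℝ W) * N) ^ m = (-1) ^ m * N ^ m :=
      (Commute.neg_one_left N).mul_pow m
    rw [neg_one_mul] at hcm
    rw [hcm, hNnil, mul_zero]
  set u : Module.End ℝ W := Polynomial.aeval (-N) P with hu
  have huu : u * u = 1 - N := by
    have h := congrArg (Polynomial.aeval (-N) : Polynomial ℝ →ₐ[ℝ] Module.End ℝ W) hPg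
    rw [map_mul, map_add, map_add, map_one, map_mul, map_pow, Polynomial.aeval_X] at h
    rw [hu, h, ← hk, hMnil, zero_mul, add_zero, sub_eq_add_neg]
  have hcNu : Commute N u := ((Commute.refl N).neg_right).aeval_poly P
  have hcSu : Commute SE u := (hcSN.neg_right).aeval_poly P
  have hsau : IsSA B' u := (hsaN.neg).aeval P
  -- invert u
  have hNnil' : IsNilpotent N := ⟨m, hNnil⟩
  obtain ⟨w, hw⟩ := hNnil'.isUnit_one_sub
  have hcu_w : Commute u ↑w := by
    rw [hw, ← huu]
    exact ((Commute.refl u).mul_right (Commute.refl u))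
  have hcu_winv : Commute u ↑w⁻¹ := hcu_w.units_inv_right
  set v : Module.End ℝ W := u * ↑w⁻¹ with hv
  have h1 : u * v = 1 := by
    rw [hv, ← mul_assoc, huu, ← hw, Units.mul_inv]
  have h2 : v * u = 1 := by
    rw [hv, mul_assoc, ← hcu_winv.eq, ← mul_assoc, huu, ← hw, Units.mul_inv]
  have hcSw : Commute SE ↑w := by
    rw [hw, ← huu]
    exact hcSu.mul_right hcSu
  have hcSv : Commute SE v := hcSu.mul_right hcSw.units_inv_right
  have hsav : IsSA B' v := hsau.inv h1 h2
  -- the complex structure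
  set J : Module.End ℝ W := SE * v with hJ
  have hsaJ : IsSA B' J := hsaSE.mul hsav hcSv
  have hJJ : J * J = -1 := by
    have hassoc : J * J = (SE * SE) * (v * v) := by
      rw [hJ, mul_assoc, ← mul_assoc v SE v, ← hcSv.eq, mul_assoc, ← mul_assoc, ← mul_assoc]
    have h3 : (1 - N) * (v * v) = 1 := by
      rw [← huu, mul_assoc, ← mul_assoc u v v, h1, one_mul, h1]
    have h4 : (N - 1) * (v * v) = -((1 - N) * (v * v)) := by
      rw [← neg_mul, neg_sub]
    rw [hassoc, hSS, h4, h3]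
  refine ⟨J, ?_, hsaJ⟩
  intro x
  have h := LinearMap.ext_iff.mp hJJ x
  simpa using h


theorem mainAux {V : Type*} [AddCommGroup V] [Module ℝ V] [FiniteDimensional ℝ V]
    (B : LinearMap.BilinForm ℝ V) (hsymm : ∀ x y, B x y = B y x)
    (hnd : B.Nondegenerate)
    (A : Module.End ℝ V) (hA : ∀ x y, B (A x) y = B x (A y))
    (a b : ℝ) (hnonreal : b ≠ 0)
    (Q : Module.End ℝ V) (hQ : Q = A * A - (2 * a) • A + (a ^ 2 + b ^ 2) • 1)
    (m : ℕ) (hm : m = Module.finrank ℝ V)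
    (E : Submodule ℝ V) (hE : E = LinearMap.ker (Q ^ m)) (hlam : E ≠ ⊥) :
    ∃ r : ℕ, HasSignature (B.restrict E) r r := by
  classical
  have hb2 : (b ^ 2 : ℝ) ≠ 0 := pow_ne_zero _ hnonreal
  -- m ≥ 1
  have hV : 0 < m := by
    rcases Nat.eq_zero_or_pos m with h | h
    · exfalso
      apply hlam
      rw [hE, h, pow_zero, Module.End.one_eq_id, LinearMap.ker_id]
    · exact h
  obtain ⟨k, hk⟩ : ∃ k, m = k + 1 := ⟨m - 1, (Nat.succ_pred_eq_of_pos hV).symm⟩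
  -- self-adjointness of Q
  have hQsa : ∀ x y, B (Q x) y = B x (Q y) := by
    intro x y
    simp only [hQ, LinearMap.add_apply, LinearMap.sub_apply, LinearMap.smul_apply,
      Module.End.mul_apply, Module.End.one_apply, map_add, map_sub, map_smul,
      LinearMap.add_apply, LinearMap.sub_apply, LinearMap.smul_apply]
    rw [hA (A x) y, hA x (A y), hA x y]
  have hQpowsa : ∀ (j : ℕ) (x y : V), B ((Q ^ j) x) y = B x ((Q ^ j) y) := by
    intro j
    induction j with
    | zero => intro x y; simp
    | succ i ih =>
        intro x y
        have hcomm : Q ((Q ^ i) y) = (Q ^ i) (Q y) := by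
          rw [← Module.End.mul_apply, ← Module.End.mul_apply, ← pow_succ', pow_succ]
        rw [pow_succ]
        simp only [Module.End.mul_apply]
        rw [ih (Q x) y, hQsa x ((Q ^ i) y), hcomm]
  -- Fitting decomposition
  have hdisj : Disjoint E (LinearMap.range (Q ^ m)) := by
    rw [Submodule.disjoint_def]
    intro x hxE hxR
    obtain ⟨z, rfl⟩ := hxR
    have hz : z ∈ LinearMap.ker (Q ^ (m + m)) := by
      rw [LinearMap.mem_ker, pow_add, Module.End.mul_apply]
      rw [hE, LinearMap.mem_ker] at hxE
      exact hxE
    rw [hm, Module.End.ker_pow_eq_ker_pow_finrank_of_le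
      (Nat.le_add_right (Module.finrank ℝ V) (Module.finrank ℝ V)), ← hm, ← hE] at hz
    rw [hE, LinearMap.mem_ker] at hz
    exact hz
  have hsup : E ⊔ LinearMap.range (Q ^ m) = ⊤ := by
    apply Submodule.eq_top_of_disjoint _ _ _ hdisj
    rw [hE, add_comm]
    exact (LinearMap.finrank_range_add_finrank_ker (Q ^ m)).ge
  have hmemE : ∀ x ∈ E, (Q ^ m) x = 0 := by
    intro x hx
    rw [hE, LinearMap.mem_ker] at hx
    exact hx
  -- nondegeneracy of the restriction
  have hres : ∀ x y : E, (B.restrict E) x y = B (x : V) (y : V) := fun x y => rfl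
  have hndE : (B.restrict E).Nondegenerate := by
    refine LinearMap.BilinForm.Nondegenerate.ofSeparatingLeft fun x hx => ?_
    have hxV : ∀ y : V, B (x : V) y = 0 := by
      intro y
      have hy : y ∈ E ⊔ LinearMap.range (Q ^ m) := by rw [hsup]; exact Submodule.mem_top
      obtain ⟨u, hu, w, hw, rfl⟩ := Submodule.mem_sup.mp hy
      obtain ⟨z, rfl⟩ := hw
      rw [map_add]
      have h1 : B (x : V) u = 0 := hx ⟨u, hu⟩
      have h2 : B (x : V) ((Q ^ m) z) = 0 := by
        rw [← hQpowsa, hmemE _ x.2, map_zero, LinearMap.zero_apply]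
      rw [h1, h2, add_zero]
    exact Subtype.ext (hnd.1 (x : V) hxV)
  -- invariance of E under A and Q
  have hcomAQ : Commute A Q := by
    rw [hQ]
    exact (((Commute.refl A).mul_right (Commute.refl A)).sub_right
      ((Commute.refl A).smul_right _)).add_right ((Commute.one_right A).smul_right _)
  have hAE : ∀ x ∈ E, A x ∈ E := by
    intro x hx
    rw [hE, LinearMap.mem_ker] at hx ⊢
    have h : (Q ^ m) (A x) = A ((Q ^ m) x) := by
      rw [← Module.End.mul_apply, ← Module.End.mul_apply, (hcomAQ.pow_right m).eq]
    rw [h, hx, map_zero]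
  have hQmem : ∀ x ∈ E, Q x ∈ E := by
    intro x hx
    rw [hE, LinearMap.mem_ker] at hx ⊢
    have h : (Q ^ m) (Q x) = Q ((Q ^ m) x) := by
      rw [← Module.End.mul_apply, ← Module.End.mul_apply, ← pow_succ, pow_succ']
    rw [h, hx, map_zero]
  -- restricted operators
  have hQEpow : (Q.restrict hQmem) ^ m = 0 := by
    rw [Module.End.pow_restrict]
    ext x
    simp [LinearMap.restrict_apply, hmemE _ x.2]
  have hQE_eq : Q.restrict hQmem
      = (A.restrict hAE) * (A.restrict hAE) - (2 * a) • (A.restrict hAE)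
        + (a ^ 2 + b ^ 2) • 1 := by
    ext x
    simp only [LinearMap.restrict_coe_apply, LinearMap.add_apply, LinearMap.sub_apply,
      LinearMap.smul_apply, Module.End.mul_apply, Module.End.one_apply, Submodule.coe_add,
      AddSubgroupClass.coe_sub, SetLike.val_smul, hQ]
  -- now work on E
  have hsymm' : ∀ x y : E, (B.restrict E) x y = (B.restrict E) y x := fun x y => hsymm _ _
  have hsaAE : IsSA (B.restrict E) (A.restrict hAE) := by
    intro x y
    exact hA _ _
  have hpow : ((A.restrict hAE) * (A.restrict hAE) - (2 * a) • (A.restrict hAE)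
      + (a ^ 2 + b ^ 2) • 1 : Module.End ℝ E) ^ m = 0 := by
    rw [← hQE_eq]
    exact hQEpow
  obtain ⟨J, hJJx, hsaJ⟩ := buildJ (B.restrict E) (A.restrict hAE) hsaAE a b hnonreal m k hk hpow
  exact keyLemma (B.restrict E) hsymm' hndE J hJJx hsaJ

theorem stmt2 {V : Type*} [AddCommGroup V] [Module ℝ V] [FiniteDimensional ℝ V]
    (B : LinearMap.BilinForm ℝ V) (hsymm : ∀ x y, B x y = B y x)
    (hnd : B.Nondegenerate) (p q : ℕ) (hsig : HasSignature B p q)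
    (A : Module.End ℝ V) (hA : ∀ x y, B (A x) y = B x (A y))
    (lam : ℂ) (hnonreal : lam.im ≠ 0) (hlam : genEig A lam ≠ ⊥) :
    ∃ r : ℕ, HasSignature (B.restrict (genEig A lam)) r r :=
  mainAux B hsymm hnd A hA lam.re lam.im hnonreal _ rfl _ rfl _ rfl hlam
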